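/- Let a, b, c be integers with abc ≠ 0, gcd(a,b,c) = 1, and a^7 + b^7 = 3c^p for a prime p ≥ 5. If 2 divides a + b then 4 divides a + b. -/

import Mathlib

lemma zmod8_odd_pow7 : ∀ k : ZMod 8, (2*k+1)^7 = 2*k+1 := by decide

lemma two_dvd_pow7_sub (a : ℤ) : (2:ℤ) ∣ a^7 - a := by
  have h : ∀ x : ZMod 2, x^7 - x = 0 := by decide
  have : ((a^7 - a : ℤ) : ZMod 2) = 0 := by push_cast; exact h a
  exact (ZMod.intCast_zmod_eq_zero_iff_dvd _ 2).mp this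

lemma odd_pow7_sub (a : ℤ) (h : a % 2 = 1) : (8:ℤ) ∣ a^7 - a := by
  obtain ⟨k, hk⟩ : ∃ k, a = 2*k+1 := ⟨a/2, by omega⟩
  have : ((a^7 - a : ℤ) : ZMod 8) = 0 := by
    subst hk; push_cast
    rw [zmod8_odd_pow7 (k : ZMod 8)]; ring
  exact (ZMod.intCast_zmod_eq_zero_iff_dvd _ 8).mp this

theorem stmt_16 (a b c : ℤ) (p : ℕ) (hp : p.Prime) (hp5 : 5 ≤ p)
    (hnt : a * b * c ≠ 0) (hprim : Int.gcd a (Int.gcd b c) = 1)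
    (heq : a ^ 7 + b ^ 7 = 3 * c ^ p) (h2 : (2 : ℤ) ∣ a + b) :
    (4 : ℤ) ∣ a + b := by
  -- a and b have the same parity; 2 ∣ a^7 + b^7
  have hab7 : (2:ℤ) ∣ a^7 + b^7 := by
    obtain ⟨k, hk⟩ := h2
    obtain ⟨x, hx⟩ := two_dvd_pow7_sub a
    obtain ⟨y, hy⟩ := two_dvd_pow7_sub b
    omega
  -- hence 2 ∣ c
  have hc : (2:ℤ) ∣ c := by
    have h2cp : (2:ℤ) ∣ c ^ p := by
      have : (2:ℤ) ∣ 3 * c ^ p := heq ▸ hab7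
      omega
    exact Int.prime_two.dvd_of_dvd_pow h2cp
  -- a and b are both odd
  have ha : a % 2 = 1 := by
    by_contra h
    have ha2 : (2:ℤ) ∣ a := by omega
    have hb2 : (2:ℤ) ∣ b := by omega
    have : (2:ℤ) ∣ (Int.gcd a (Int.gcd b c) : ℤ) :=
      Int.natCast_dvd_natCast.mpr (Int.dvd_gcd ha2 (Int.natCast_dvd_natCast.mpr (Int.dvd_gcd hb2 hc)))
    rw [hprim] at this
    norm_num at this
  have hb : b % 2 = 1 := by omega
  -- 8 ∣ a^7 + b^7
  have h8 : (8:ℤ) ∣ a^7 + b^7 := by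
    have h1 : (2:ℤ)^5 ∣ 2^p := pow_dvd_pow 2 hp5
    have h2' : (2:ℤ)^p ∣ c^p := pow_dvd_pow_of_dvd hc p
    have h32 : (32:ℤ) ∣ c^p := by
      have := h1.trans h2'
      norm_num at this ⊢
      exact this
    rw [heq]
    obtain ⟨d, hd⟩ := h32
    exact ⟨3 * (4 * d), by rw [hd]; ring⟩
  have h8a := odd_pow7_sub a ha
  have h8b := odd_pow7_sub b hb
  have : (8:ℤ) ∣ a + b := by
    have : (8:ℤ) ∣ (a^7 + b^7) - (a^7 - a) - (b^7 - b) :=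
      dvd_sub (dvd_sub h8 h8a) h8b
    simpa using this
  omega
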